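/- There is no infinite sequence a_1, a_2, ... of elements of ℕ^n such that for every index i there exists a coordinate j (depending on i) with a_{i,j} < a_{i',j} for all i' < i. -/
import Mathlib

lemma aux_no_strictAnti_nat (f : ℕ → ℕ) (h : StrictAnti f) : False := by
  have key : ∀ k, f k + k ≤ f 0 := by
    intro k
    induction k with
    | zero => simp
    | succ m ih =>
      have h2 : f (m + 1) < f m := h (Nat.lt_succ_self m)
      omega
  have := key (f 0 + 1)
  omega


/-- There is no infinite sequence `a 0, a 1, ...` of elements of `ℕ^n` such that
for every index `i` there exists a coordinate `j` (depending on `i`) with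
`a i j < a i' j` for all earlier indices `i' < i`. -/
theorem no_infinite_coordinatewise_descending_sequence (n : ℕ) :
    ¬ ∃ a : ℕ → (Fin n → ℕ), ∀ i : ℕ, ∃ j : Fin n, ∀ i' < i, a i j < a i' j := by
  rintro ⟨a, ha⟩
  choose j hj using ha
  obtain ⟨c, hc⟩ := Finite.exists_infinite_fiber j
  have hcs : Set.Infinite (j ⁻¹' {c}) := Set.infinite_coe_iff.mp hc
  set g : ℕ → ℕ := fun k => Nat.nth (· ∈ j ⁻¹' {c}) k with hg
  have hmem : ∀ k, j (g k) = c := fun k => Nat.nth_mem_of_infinite hcs k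
  have hmono : StrictMono g := Nat.nth_strictMono hcs
  have hanti : StrictAnti (fun k => a (g k) c) := by
    intro k l hkl
    have h1 := hj (g l) (g k) (hmono hkl)
    rwa [hmem l] at h1
  exact aux_no_strictAnti_nat _ hanti
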